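/- In an infinite Fort transformation group (F,G) with G abelian, if x,y ∈ F both have infinite orbits then (x,y) is proximal. -/

import Mathlib

/-- The Fort topology on `F` with particular point `b`: a set is open iff it misses `b`
or has finite complement. -/
def fortTop (F : Type*) (b : F) : TopologicalSpace F where
  IsOpen U := b ∈ U → (Uᶜ : Set F).Finite
  isOpen_univ := fun _ => by simp
  isOpen_inter := fun U V hU hV h => by
    rw [Set.compl_inter]
    exact (hU h.1).union (hV h.2)
  isOpen_sUnion := fun S hS h => by
    obtain ⟨U, hUS, hbU⟩ := h
    exact (hS U hUS hbU).subset (Set.compl_subset_compl.2 (Set.subset_sUnion_of_mem hUS))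

/-- Proximality in a transformation semigroup (via a net encoded as a nontrivial filter). -/
def ProxPair (S X : Type*) [TopologicalSpace X] [SMul S X] (x y : X) : Prop :=
  ∃ z : X, ∃ l : Filter S, l.NeBot ∧
    Filter.Tendsto (fun s => s • x) l (nhds z) ∧ Filter.Tendsto (fun s => s • y) l (nhds z)


open MulAction Pointwise in
lemma keyLemma {F G : Type*} [Group G] [MulAction G F] (x y : F)
    (hx : (MulAction.orbit G x).Infinite) (hy : (MulAction.orbit G y).Infinite)
    (A : Set F) (hA : A.Finite) : ∃ g : G, g • x ∉ A ∧ g • y ∉ A := by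
  classical
  by_contra hcon
  push_neg at hcon
  -- choice of coset representatives
  have gx : ∀ a : F, ∃ g : G, (∃ g' : G, g' • x = a) → g • x = a := by
    intro a
    by_cases h : ∃ g' : G, g' • x = a
    · exact ⟨h.choose, fun _ => h.choose_spec⟩
    · exact ⟨1, fun h' => absurd h' h⟩
  have gy : ∀ a : F, ∃ g : G, (∃ g' : G, g' • y = a) → g • y = a := by
    intro a
    by_cases h : ∃ g' : G, g' • y = a
    · exact ⟨h.choose, fun _ => h.choose_spec⟩
    · exact ⟨1, fun h' => absurd h' h⟩
  choose kx hkx using gx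
  choose ky hky using gy
  set s : Finset (F × Bool) := hA.toFinset ×ˢ Finset.univ with hs
  set Hs : F × Bool → Subgroup G := fun i => if i.2 then stabilizer G x else stabilizer G y
  set k : F × Bool → G := fun i => if i.2 then kx i.1 else ky i.1
  have hcovers : ⋃ i ∈ s, k i • (Hs i : Set G) = Set.univ := by
    rw [Set.eq_univ_iff_forall]
    intro g
    simp only [Set.mem_iUnion]
    have hor : g • x ∈ A ∨ g • y ∈ A := by
      by_cases h : g • x ∈ A
      · exact Or.inl h
      · exact Or.inr (hcon g h)
    rcases hor with h | h
    · refine ⟨(g • x, true), ?_, ?_⟩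
      · simp [hs, h]
      · rw [mem_leftCoset_iff]
        show (kx (g • x))⁻¹ * g ∈ stabilizer G x
        have := hkx (g • x) ⟨g, rfl⟩
        rw [MulAction.mem_stabilizer_iff, mul_smul, inv_smul_eq_iff, this]
    · refine ⟨(g • y, false), ?_, ?_⟩
      · simp [hs, h]
      · rw [mem_leftCoset_iff]
        show (ky (g • y))⁻¹ * g ∈ stabilizer G y
        have := hky (g • y) ⟨g, rfl⟩
        rw [MulAction.mem_stabilizer_iff, mul_smul, inv_smul_eq_iff, this]
  obtain ⟨i, _, hfin⟩ := Subgroup.exists_finiteIndex_of_leftCoset_cover hcovers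
  rcases Bool.eq_false_or_eq_true i.2 with h2 | h2
  · have heq : (Hs i) = stabilizer G x := by simp [Hs, h2]
    rw [heq] at hfin
    have : Finite (G ⧸ stabilizer G x) := by haveI := hfin; exact Subgroup.finite_quotient_of_finiteIndex
    have : Finite (orbit G x) := Finite.of_equiv _ (orbitEquivQuotientStabilizer G x).symm
    exact hx (Set.toFinite _)
  · have heq : (Hs i) = stabilizer G y := by simp [Hs, h2]
    rw [heq] at hfin
    have : Finite (G ⧸ stabilizer G y) := by haveI := hfin; exact Subgroup.finite_quotient_of_finiteIndex
    have : Finite (orbit G y) := Finite.of_equiv _ (orbitEquivQuotientStabilizer G y).symm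
    exact hy (Set.toFinite _)

/-- In an infinite Fort transformation group `(F,G)` with `G` abelian, any two points with
infinite orbits are proximal. -/
theorem stmt11 {F G : Type*} [CommGroup G] [MulAction G F] (b : F) (hF : Infinite F)
    (hb : ∀ g : G, g • b = b)
    (hcont : ∀ g : G, @Continuous F F (fortTop F b) (fortTop F b) fun x => g • x)
    (x y : F) (hx : (MulAction.orbit G x).Infinite) (hy : (MulAction.orbit G y).Infinite) :
    @ProxPair G F (fortTop F b) _ x y := by
  classical
  letI : TopologicalSpace F := fortTop F b
  refine ⟨b, ?_⟩
  have : Nonempty {A : Set F // A.Finite} := ⟨⟨∅, Set.finite_empty⟩⟩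
  set S : {A : Set F // A.Finite} → Set G := fun A => {g | g • x ∉ A.1 ∧ g • y ∉ A.1} with hS
  set l : Filter G := ⨅ A, Filter.principal (S A) with hl
  have hdir : Directed (· ≥ ·) fun A => Filter.principal (S A) := by
    intro A B
    refine ⟨⟨A.1 ∪ B.1, A.2.union B.2⟩, ?_, ?_⟩ <;>
    · simp only [ge_iff_le, Filter.le_principal_iff, Filter.mem_principal]
      intro g hg
      exact ⟨fun h => hg.1 (by simp [h]), fun h => hg.2 (by simp [h])⟩
  have hne : ∀ A, (Filter.principal (S A)).NeBot := by
    intro A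
    rw [Filter.principal_neBot_iff]
    obtain ⟨g, h1, h2⟩ := keyLemma x y hx hy A.1 A.2
    exact ⟨g, h1, h2⟩
  have hlne : l.NeBot := Filter.iInf_neBot_of_directed hdir hne
  have hmem : ∀ A, S A ∈ l := fun A => Filter.mem_iInf_of_mem A (Filter.mem_principal_self _)
  have htend : ∀ w : F, Filter.Tendsto (fun g : G => g • w) l (nhds b) →
      True := fun _ _ => trivial
  refine ⟨l, hlne, ?_, ?_⟩ <;>
  · rw [tendsto_nhds]
    intro U hU hbU
    have hfin : (Uᶜ : Set F).Finite := hU hbU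
    have := hmem ⟨Uᶜ, hfin⟩
    filter_upwards [this] with g hg
    · first
      | exact not_not.mp (fun h => hg.1 h)
      | exact not_not.mp (fun h => hg.2 h)
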